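/- For n ≥ 2, the generalized roundness of ℤⁿ with the word metric associated to its canonical basis is at most 1: for every p > 1 there exist m ≥ 2 and points a_1,...,a_m, b_1,...,b_m in ℤⁿ violating the inequality ∑_{i<j} (d(a_i,a_j)^p + d(b_i,b_j)^p) ≤ ∑_{i,j} d(a_i,b_j)^p. -/

import Mathlib

lemma two_point_sum (n : ℕ) (hn : 2 ≤ n) (f : Fin n → ℝ)
    (hf : ∀ k : Fin n, f k = (if k = ⟨0, by omega⟩ then f ⟨0, by omega⟩ else 0)
      + (if k = ⟨1, by omega⟩ then f ⟨1, by omega⟩ else 0)) :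
    ∑ k, f k = f ⟨0, by omega⟩ + f ⟨1, by omega⟩ := by
  rw [Finset.sum_congr rfl (fun k _ => hf k), Finset.sum_add_distrib,
    Finset.sum_ite_eq' Finset.univ, Finset.sum_ite_eq' Finset.univ]
  simp

/-- For n ≥ 2, the generalized roundness of ℤⁿ with the ℓ¹ word metric is at most 1:
for every p > 1 some 2m-gon inequality fails. -/
theorem zn_gr_le_one (n : ℕ) (hn : 2 ≤ n) (d : (Fin n → ℤ) → (Fin n → ℤ) → ℝ)
    (hd : ∀ x y : Fin n → ℤ, d x y = ∑ k, |(x k : ℝ) - y k|)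
    (p : ℝ) (hp : 1 < p) :
    ∃ (m : ℕ), 2 ≤ m ∧ ∃ a b : Fin m → (Fin n → ℤ),
      ¬ (∑ q ∈ Finset.univ.filter (fun q : Fin m × Fin m => q.1 < q.2),
            (d (a q.1) (a q.2) ^ p + d (b q.1) (b q.2) ^ p)
          ≤ ∑ i : Fin m, ∑ j : Fin m, d (a i) (b j) ^ p) := by
  have h0 : (0:ℕ) < n := by omega
  have h1 : (1:ℕ) < n := by omega
  set k0 : Fin n := ⟨0, h0⟩ with hk0
  set k1 : Fin n := ⟨1, h1⟩ with hk1
  have hne : k0 ≠ k1 := by simp [hk0, hk1, Fin.ext_iff]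
  set e0 : Fin n → ℤ := fun k => if k = k0 then 1 else 0 with he0
  set e1 : Fin n → ℤ := fun k => if k = k1 then 1 else 0 with he1
  refine ⟨2, le_refl 2, ![0, fun k => e0 k + e1 k], ![e0, e1], ?_⟩
  -- compute the six distances
  have key : ∀ x y : Fin n → ℤ, d x y =
      |((x k0 : ℝ)) - y k0| + |((x k1 : ℝ)) - y k1| → True := fun _ _ _ => trivial
  have dval : ∀ x y : Fin n → ℤ, (∀ k : Fin n, k ≠ k0 → k ≠ k1 → x k = y k) →
      d x y = |((x k0 : ℝ)) - y k0| + |((x k1 : ℝ)) - y k1| := by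
    intro x y h
    rw [hd]
    exact two_point_sum n hn _ (by
      intro k
      by_cases hk : k = k0
      · simp [hk, hne, hk0]
      · by_cases hk' : k = k1
        · simp [hk', Ne.symm hne, hk1]
        · simp [(show k ≠ ⟨0, h0⟩ from hk), (show k ≠ ⟨1, h1⟩ from hk'), h k hk hk'])
  have d01 : d (0 : Fin n → ℤ) (fun k => e0 k + e1 k) = 2 := by
    rw [dval _ _ (fun k h h' => by simp [he0, he1, h, h'])]
    simp [he0, he1, hne, Ne.symm hne]
    norm_num
  have db : d e0 e1 = 2 := by
    rw [dval _ _ (fun k h h' => by simp [he0, he1, h, h'])]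
    simp [he0, he1, hne, Ne.symm hne]
    norm_num
  have d00 : d (0 : Fin n → ℤ) e0 = 1 := by
    rw [dval _ _ (fun k h h' => by simp [he0, h])]
    simp [he0, hne, Ne.symm hne]
  have d0e1 : d (0 : Fin n → ℤ) e1 = 1 := by
    rw [dval _ _ (fun k h h' => by simp [he1, h'])]
    simp [he1, hne, Ne.symm hne]
  have d10 : d (fun k => e0 k + e1 k) e0 = 1 := by
    rw [dval _ _ (fun k h h' => by simp [he0, he1, h, h'])]
    simp [he0, he1, hne, Ne.symm hne]
  have d11 : d (fun k => e0 k + e1 k) e1 = 1 := by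
    rw [dval _ _ (fun k h h' => by simp [he0, he1, h, h'])]
    simp [he0, he1, hne, Ne.symm hne]
  -- reduce the sums over Fin 2
  rw [Finset.sum_filter]
  rw [Fintype.sum_prod_type]
  simp only [Fin.sum_univ_two, Matrix.cons_val_zero, Matrix.cons_val_one, Matrix.head_cons]
  have : ¬ ((0:Fin 2) < 0) := by simp
  have h01 : ((0:Fin 2) < 1) := by decide
  have h10 : ¬ ((1:Fin 2) < 0) := by decide
  have h11 : ¬ ((1:Fin 2) < 1) := by simp
  simp only [this, h01, h10, h11, if_true, if_false]
  rw [d01, db, d00, d0e1, d10, d11]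
  rw [Real.one_rpow]
  have h2 : (2:ℝ) = (2:ℝ) ^ (1:ℝ) := (Real.rpow_one 2).symm
  have hlt : (2:ℝ) ^ (1:ℝ) < (2:ℝ) ^ p :=
    Real.rpow_lt_rpow_left_iff (by norm_num) |>.mpr hp
  rw [Real.rpow_one] at hlt
  push_neg
  nlinarith
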